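/- Let N ≥ 2 be a natural number. Let λ₁ ≥ λ₂ ≥ … ≥ λ_N be real numbers, let Z₁, …, Z_N be real numbers, let x₁, …, x_{N−1} be real numbers, and set s = (Z₁ + … + Z_{N−1})/(N−1). Assume: (i) λ_{i+1} ≤ xᵢ + s ≤ λᵢ for every i ∈ {1, …, N−1}; and (ii) for every subset I ⊆ {1, …, N−1}, Σ_{i ∈ I} (Zᵢ − s) ≤ Σ_{i=1}^{|I|} xᵢ. Then for every subset I ⊆ {1, …, N−1}, Σ_{i ∈ I} Zᵢ ≤ Σ_{i=1}^{|I|} λᵢ. -/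

import Mathlib

/-- let `N ≥ 2`, `λ₁ ≥ … ≥ λ_N`, `Z₁,…,Z_N`, `x₁,…,x_{N−1}` real, and
`s = (Z₁+…+Z_{N−1})/(N−1)`.  If `λ_{i+1} ≤ xᵢ + s ≤ λᵢ` for all `i ≤ N−1`, and
`Σ_{i∈I} (Zᵢ − s) ≤ Σ_{i=1}^{|I|} xᵢ` for every `I ⊆ {1,…,N−1}`, then
`Σ_{i∈I} Zᵢ ≤ Σ_{i=1}^{|I|} λᵢ` for every `I ⊆ {1,…,N−1}`.
(Indices are 0-based; "the first `m`" entries are those with index `< m`.) -/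
theorem stmt14 (N : ℕ) (hN : 2 ≤ N) (lam Z : Fin N → ℝ) (x : Fin (N - 1) → ℝ)
    (hlam : ∀ i j : Fin N, i ≤ j → lam j ≤ lam i)
    (s : ℝ) (hs : s = (∑ i : Fin (N - 1), Z (Fin.castLE (by omega) i)) / ((N : ℝ) - 1))
    (hx : ∀ i : Fin (N - 1),
      lam ⟨(i : ℕ) + 1, by have := i.isLt; omega⟩ ≤ x i + s ∧
        x i + s ≤ lam (Fin.castLE (by omega) i))
    (hZ : ∀ I : Finset (Fin (N - 1)),
      ∑ i ∈ I, (Z (Fin.castLE (by omega) i) - s) ≤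
        ∑ i ∈ Finset.univ.filter (fun j : Fin (N - 1) => (j : ℕ) < I.card), x i) :
    ∀ I : Finset (Fin (N - 1)),
      ∑ i ∈ I, Z (Fin.castLE (by omega) i) ≤
        ∑ i ∈ Finset.univ.filter (fun j : Fin N => (j : ℕ) < I.card), lam i := by
  intro I
  have h1 := hZ I
  set m := I.card with hm
  have hmle : m ≤ N - 1 := by
    have := Finset.card_le_univ I
    simpa using this
  have hcard : (Finset.univ.filter (fun j : Fin (N-1) => (j:ℕ) < m)).card = m := by
    have : (Finset.univ.filter (fun j : Fin (N-1) => (j:ℕ) < m)) =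
        Finset.map (Fin.castLEEmb hmle) Finset.univ := by
      ext j
      simp [Fin.lt_iff_val_lt_val, Fin.exists_iff, Fin.ext_iff]
    simp [this]
  -- sum of Z = sum of (Z-s) + m*s
  have key : ∑ i ∈ I, Z (Fin.castLE (by omega) i)
      = (∑ i ∈ I, (Z (Fin.castLE (by omega) i) - s)) + m * s := by
    rw [Finset.sum_sub_distrib, Finset.sum_const, nsmul_eq_mul, hm]
    ring
  rw [key]
  have step1 : (∑ i ∈ I, (Z (Fin.castLE (by omega) i) - s)) + m * s
      ≤ ∑ i ∈ Finset.univ.filter (fun j : Fin (N-1) => (j:ℕ) < m), (x i + s) := by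
    rw [Finset.sum_add_distrib, Finset.sum_const, hcard, nsmul_eq_mul]
    exact add_le_add h1 le_rfl
  refine step1.trans ?_
  have step2 : ∑ i ∈ Finset.univ.filter (fun j : Fin (N-1) => (j:ℕ) < m), (x i + s)
      ≤ ∑ i ∈ Finset.univ.filter (fun j : Fin (N-1) => (j:ℕ) < m),
          lam (Fin.castLE (by omega) i) := by
    apply Finset.sum_le_sum
    intro i _
    exact (hx i).2
  refine step2.trans ?_
  -- reindex
  have : ∑ i ∈ Finset.univ.filter (fun j : Fin (N-1) => (j:ℕ) < m),
      lam (Fin.castLE (by omega : N - 1 ≤ N) i)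
      = ∑ i ∈ Finset.univ.filter (fun j : Fin N => (j:ℕ) < m), lam i := by
    apply Finset.sum_nbij' (i := fun a => Fin.castLE (by omega : N - 1 ≤ N) a)
      (j := fun b => if h : (b : ℕ) < N - 1 then ⟨(b : ℕ), h⟩ else ⟨0, by omega⟩)
    · intro a ha
      simp only [Finset.mem_filter, Finset.mem_univ, true_and] at ha ⊢
      simpa using ha
    · intro b hb
      simp only [Finset.mem_filter, Finset.mem_univ, true_and] at hb ⊢
      have hb' : (b : ℕ) < N - 1 := lt_of_lt_of_le hb hmle
      rw [dif_pos hb']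
      exact hb
    · intro a ha
      have h' : ((Fin.castLE (by omega : N - 1 ≤ N) a : Fin N) : ℕ) < N - 1 := a.isLt
      simp only [dif_pos h']
      rfl
    · intro b hb
      simp only [Finset.mem_filter, Finset.mem_univ, true_and] at hb
      have hb' : (b : ℕ) < N - 1 := lt_of_lt_of_le hb hmle
      simp only [dif_pos hb']
      rfl
    · intro a ha; rfl
  exact le_of_eq this
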